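/- Let n ≥ 1 and let R = (ℤ[U₀,U₁,...,Uₙ])[[t]] be the ring of formal power series in t with coefficients in the integral multivariable polynomial ring. For every element ξ ∈ R and a = U₀ − t·ξ, the quotient ring R/(a) of R by the principal ideal generated by a is isomorphic, as a ring, to (ℤ[U₁,...,Uₙ])[[t]], the power series ring in t over the polynomial ring in the remaining n variables. -/

import Mathlib

open PowerSeries Polynomial

section Aux

variable {S : Type*} [CommRing S]

/-- The quotient sequence for dividing `F` by `C X - (t) * ξ` in `(S[X])⟦t⟧`. -/
noncomputable def myQ (ξ F : PowerSeries (Polynomial S)) : ℕ → Polynomial S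
  | k => (PowerSeries.coeff k F + ∑ i ∈ (Finset.range k).attach,
      PowerSeries.coeff i.1 ξ * myQ ξ F (k - 1 - i.1)).divX
  termination_by k => k
  decreasing_by have := Finset.mem_range.mp i.2; omega

/-- The "dividend at stage k". -/
noncomputable def myD (ξ F : PowerSeries (Polynomial S)) (k : ℕ) : Polynomial S :=
  PowerSeries.coeff k F + ∑ i ∈ Finset.range k,
      PowerSeries.coeff i ξ * myQ ξ F (k - 1 - i)

lemma myQ_eq (ξ F : PowerSeries (Polynomial S)) (k : ℕ) :
    myQ ξ F k = (myD ξ F k).divX := by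
  rw [myQ, myD]
  congr 1
  rw [← Finset.sum_attach (Finset.range k) (fun i => PowerSeries.coeff i ξ * myQ ξ F (k - 1 - i))]

/-- Division with remainder: `F = (C X - X*ξ) * Q + map C r`. -/
lemma my_div (ξ F : PowerSeries (Polynomial S)) :
    F = (PowerSeries.C Polynomial.X - PowerSeries.X * ξ) * PowerSeries.mk (myQ ξ F)
        + PowerSeries.map (Polynomial.C.comp (RingHom.id S))
            (PowerSeries.mk fun k => (myD ξ F k).coeff 0) := by
  apply PowerSeries.ext; intro k
  rw [map_add, sub_mul, map_sub, PowerSeries.coeff_C_mul, PowerSeries.coeff_map,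
    PowerSeries.coeff_mk, PowerSeries.coeff_mk, myQ_eq]
  have hXm : PowerSeries.coeff (R := Polynomial S) k (PowerSeries.X * ξ * PowerSeries.mk (myQ ξ F))
      = myD ξ F k - PowerSeries.coeff k F := by
    cases k with
    | zero =>
      rw [mul_assoc, PowerSeries.coeff_zero_X_mul, myD]
      simp
    | succ m =>
      rw [mul_assoc, PowerSeries.coeff_succ_X_mul, PowerSeries.coeff_mul, myD,
        Finset.Nat.sum_antidiagonal_eq_sum_range_succ_mk]
      simp only [PowerSeries.coeff_mk, add_sub_cancel_left, Nat.add_sub_cancel]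
  rw [hXm]
  simp only [RingHom.comp_apply, RingHom.id_apply]
  linear_combination -Polynomial.X_mul_divX_add (myD ξ F k)

/-- Uniqueness: if `(C X - X*ξ) * Q = map C r` then `r = 0`. -/
lemma my_unique (ξ Q : PowerSeries (Polynomial S)) (r : PowerSeries S)
    (h : (PowerSeries.C Polynomial.X - PowerSeries.X * ξ) * Q
        = PowerSeries.map (Polynomial.C.comp (RingHom.id S)) r) :
    r = 0 := by
  have key : ∀ k, PowerSeries.coeff k Q = 0 ∧ PowerSeries.coeff k r = 0 := by
    intro k
    induction k using Nat.strong_induction_on with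
    | _ k ih =>
      have hk := congrArg (PowerSeries.coeff (R := Polynomial S) k) h
      rw [sub_mul, map_sub, PowerSeries.coeff_C_mul, PowerSeries.coeff_map] at hk
      have hXm : PowerSeries.coeff (R := Polynomial S) k (PowerSeries.X * ξ * Q) = 0 := by
        cases k with
        | zero => rw [mul_assoc, PowerSeries.coeff_zero_X_mul]
        | succ m =>
          rw [mul_assoc, PowerSeries.coeff_succ_X_mul, PowerSeries.coeff_mul]
          refine Finset.sum_eq_zero fun p hp => ?_
          have h2 : p.2 < m + 1 := by
            have := Finset.HasAntidiagonal.antidiagonal.fst_le hp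
            have := Finset.HasAntidiagonal.antidiagonal.snd_le hp
            omega
          rw [(ih p.2 h2).1, mul_zero]
      rw [hXm, sub_zero] at hk
      -- hk : X * coeff k Q = C (r k)
      simp only [RingHom.comp_apply, RingHom.id_apply] at hk
      have hr0 : PowerSeries.coeff (R := S) k r = 0 := by
        have := congrArg (fun p => Polynomial.coeff p 0) hk
        simpa [Polynomial.mul_coeff_zero] using this.symm
      have hQ0 : PowerSeries.coeff (R := Polynomial S) k Q = 0 := by
        rw [hr0, map_zero] at hk
        ext m
        have := congrArg (fun p => Polynomial.coeff p (m + 1)) hk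
        simpa [Polynomial.coeff_X_mul] using this
      exact ⟨hQ0, hr0⟩
  ext k
  simpa using (key k).2

/-- The key bijection for power series over a polynomial ring. -/
lemma my_bijective (ξ : PowerSeries (Polynomial S)) :
    Function.Bijective
      ((Ideal.Quotient.mk (Ideal.span
        {PowerSeries.C (R := Polynomial S) Polynomial.X - PowerSeries.X * ξ})).comp
        (PowerSeries.map (Polynomial.C.comp (RingHom.id S)))) := by
  set a := PowerSeries.C (R := Polynomial S) Polynomial.X - PowerSeries.X * ξ with ha
  constructor
  · rw [injective_iff_map_eq_zero]
    intro r hr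
    rw [RingHom.comp_apply, Ideal.Quotient.eq_zero_iff_mem, Ideal.mem_span_singleton] at hr
    obtain ⟨Q, hQ⟩ := hr
    exact my_unique ξ Q r hQ.symm
  · intro x
    obtain ⟨F, rfl⟩ := Ideal.Quotient.mk_surjective x
    refine ⟨PowerSeries.mk fun k => (myD ξ F k).coeff 0, ?_⟩
    rw [RingHom.comp_apply]
    conv_rhs => rw [my_div ξ F]
    rw [map_add, map_mul]
    have : Ideal.Quotient.mk (Ideal.span {a}) a = 0 := by
      rw [Ideal.Quotient.eq_zero_iff_mem]
      exact Ideal.subset_span rfl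
    rw [this, zero_mul, zero_add]

/-- Power series map over a ring equivalence. -/
noncomputable def psMapEquiv {A B : Type*} [CommRing A] [CommRing B] (e : A ≃+* B) :
    PowerSeries A ≃+* PowerSeries B :=
  RingEquiv.ofRingHom (PowerSeries.map (e : A →+* B)) (PowerSeries.map (e.symm : B →+* A))
    (by ext F k; simp [PowerSeries.coeff_map]) (by ext F k; simp [PowerSeries.coeff_map])

end Aux

/-- For `n ≥ 1`, in `R = (ℤ[U₀,…,Uₙ])[[t]]`, for every `ξ ∈ R` and
`a = U₀ − t·ξ`, the quotient `R/(a)` is isomorphic as a ring to `(ℤ[U₁,…,Uₙ])[[t]]`. -/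
theorem stmt_1 (n : ℕ) (hn : 1 ≤ n)
    (ξ : PowerSeries (MvPolynomial (Fin (n + 1)) ℤ)) :
    Nonempty
      ((PowerSeries (MvPolynomial (Fin (n + 1)) ℤ) ⧸
          Ideal.span {PowerSeries.C (R := MvPolynomial (Fin (n + 1)) ℤ) (MvPolynomial.X 0)
            - PowerSeries.X * ξ}) ≃+*
        PowerSeries (MvPolynomial (Fin n) ℤ)) := by
  set B := MvPolynomial (Fin n) ℤ
  let E : MvPolynomial (Fin (n + 1)) ℤ ≃+* Polynomial B :=
    (MvPolynomial.finSuccEquiv ℤ n).toRingEquiv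
  let EP : PowerSeries (MvPolynomial (Fin (n + 1)) ℤ) ≃+* PowerSeries (Polynomial B) :=
    psMapEquiv E
  set a := PowerSeries.C (R := MvPolynomial (Fin (n + 1)) ℤ) (MvPolynomial.X 0)
      - PowerSeries.X * ξ with ha
  set ξ' := EP ξ with hξ'
  have hc : (EP : PowerSeries (MvPolynomial (Fin (n + 1)) ℤ) →+* PowerSeries (Polynomial B))
      = PowerSeries.map (E : MvPolynomial (Fin (n + 1)) ℤ →+* Polynomial B) := rfl
  have hEa : (EP : PowerSeries (MvPolynomial (Fin (n + 1)) ℤ) →+* PowerSeries (Polynomial B)) a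
      = PowerSeries.C (R := Polynomial B) Polynomial.X - PowerSeries.X * ξ' := by
    rw [hc, ha, map_sub, map_mul, PowerSeries.map_C, PowerSeries.map_X]
    have hx : (E : MvPolynomial (Fin (n + 1)) ℤ →+* Polynomial B) (MvPolynomial.X 0)
        = Polynomial.X := by
      show (MvPolynomial.finSuccEquiv ℤ n : MvPolynomial (Fin (n + 1)) ℤ →+* Polynomial B)
          (MvPolynomial.X 0) = Polynomial.X
      simpa using MvPolynomial.finSuccEquiv_X_zero (R := ℤ) (n := n)
    rw [hx, hξ']
    rfl
  have hmap : Ideal.span {PowerSeries.C (R := Polynomial B) Polynomial.X - PowerSeries.X * ξ'}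
      = (Ideal.span {a}).map (EP : _ →+* _) := by
    rw [Ideal.map_span, Set.image_singleton, hEa]
  let q1 := Ideal.quotientEquiv (Ideal.span {a})
    (Ideal.span {PowerSeries.C (R := Polynomial B) Polynomial.X - PowerSeries.X * ξ'}) EP hmap
  let q2 := RingEquiv.ofBijective _ (my_bijective ξ')
  exact ⟨q1.trans q2.symm⟩
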